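/- For any σ ∈ ((n−2)π/2, nπ/2), the set Γ^σ = {λ ∈ ℝⁿ : ∑ᵢ arctan λᵢ > σ} is a convex subset of ℝⁿ. -/

import Mathlib

open Real Finset

lemma arctan_add_le_of_nonneg {x y : ℝ} (hx : 0 ≤ x) (hy : 0 ≤ y) :
    arctan (x + y) ≤ arctan x + arctan y := by
  rcases lt_or_ge (x * y) 1 with h | h
  · rw [Real.arctan_add h]
    apply Real.arctan_strictMono.monotone
    rw [le_div_iff₀ (by linarith)]
    nlinarith [mul_nonneg (add_nonneg hx hy) (mul_nonneg hx hy)]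
  · have hx0 : 0 < x := by nlinarith
    have hy' : x⁻¹ ≤ y := by
      rw [inv_le_iff_one_le_mul₀ hx0]; nlinarith
    have h2 : arctan x⁻¹ ≤ arctan y := Real.arctan_strictMono.monotone hy'
    rw [Real.arctan_inv_of_pos hx0] at h2
    have := Real.arctan_lt_pi_div_two (x + y)
    linarith

lemma arctan_sum_le {ι : Type*} [DecidableEq ι] (s : Finset ι) (c : ι → ℝ)
    (hc : ∀ i ∈ s, 0 ≤ c i) :
    arctan (∑ i ∈ s, c i) ≤ ∑ i ∈ s, arctan (c i) := by
  induction s using Finset.cons_induction with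
  | empty => simp
  | cons a s ha ih =>
    rw [Finset.sum_cons, Finset.sum_cons]
    have h1 : arctan (c a + ∑ i ∈ s, c i) ≤ arctan (c a) + arctan (∑ i ∈ s, c i) :=
      arctan_add_le_of_nonneg (hc a (Finset.mem_cons_self a s))
        (Finset.sum_nonneg fun i hi => hc i (Finset.mem_cons_of_mem hi))
    have h2 := ih fun i hi => hc i (Finset.mem_cons_of_mem hi)
    linarith

lemma sum_arctan_lt_core {m : ℕ} (Λ μ : Fin m → ℝ)
    (hΛ : ((m : ℝ) - 2) * (π / 2) < ∑ i, arctan (Λ i))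
    (hμ : ∑ i, μ i = 0) : 0 ≤ ∑ i, Λ i * μ i ^ 2 := by
  by_cases hall : ∀ i, 0 ≤ Λ i
  · exact Finset.sum_nonneg fun i _ => mul_nonneg (hall i) (sq_nonneg _)
  push_neg at hall
  obtain ⟨j, hj⟩ := hall
  set b : ℝ := -Λ j with hb_def
  have hb : 0 < b := by simp [hb_def]; linarith
  -- every other coordinate exceeds b
  have hpos : ∀ i, i ≠ j → b < Λ i := by
    intro i hij
    have h2m : 2 ≤ m := by
      rcases Nat.lt_or_ge m 2 with h | h
      · interval_cases m
        · exact i.elim0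
        · exact absurd (Subsingleton.elim i j) hij
      · exact h
    have hjmem : j ∈ Finset.univ.erase i := Finset.mem_erase.2 ⟨Ne.symm hij, Finset.mem_univ j⟩
    have hsplit1 : arctan (Λ i) + ∑ k ∈ Finset.univ.erase i, arctan (Λ k) = ∑ k, arctan (Λ k) :=
      Finset.add_sum_erase _ (fun k => arctan (Λ k)) (Finset.mem_univ i)
    have hsplit2 : arctan (Λ j) + ∑ k ∈ (Finset.univ.erase i).erase j, arctan (Λ k)
        = ∑ k ∈ Finset.univ.erase i, arctan (Λ k) :=
      Finset.add_sum_erase _ (fun k => arctan (Λ k)) hjmem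
    have hcard : (((Finset.univ.erase i).erase j).card : ℝ) = (m : ℝ) - 2 := by
      rw [Finset.card_erase_of_mem hjmem, Finset.card_erase_of_mem (Finset.mem_univ i),
        Finset.card_univ, Fintype.card_fin]
      have : m - 1 - 1 = m - 2 := by omega
      rw [this, Nat.cast_sub h2m]
      norm_num
    have hrest : ∑ k ∈ (Finset.univ.erase i).erase j, arctan (Λ k) ≤ ((m : ℝ) - 2) * (π / 2) := by
      have := Finset.sum_le_card_nsmul ((Finset.univ.erase i).erase j) (fun k => arctan (Λ k))
        (π / 2) (fun k _ => (Real.arctan_lt_pi_div_two _).le)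
      rw [nsmul_eq_mul] at this
      rw [← hcard]
      exact this
    have hij2 : 0 < arctan (Λ i) + arctan (Λ j) := by linarith
    have : arctan b < arctan (Λ i) := by
      have : arctan (Λ j) = -arctan b := by
        rw [hb_def]; simp [Real.arctan_neg]
      linarith
    exact Real.arctan_strictMono.lt_iff_lt.1 this
  -- harmonic sum bound
  set s : Finset (Fin m) := Finset.univ.erase j with hs_def
  have hjmem' : j ∈ (Finset.univ : Finset (Fin m)) := Finset.mem_univ j
  have hΛpos : ∀ i ∈ s, 0 < Λ i := fun i hi => lt_trans hb (hpos i (Finset.mem_erase.1 hi).1)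
  have hsplitA : arctan (Λ j) + ∑ k ∈ s, arctan (Λ k) = ∑ k, arctan (Λ k) :=
    Finset.add_sum_erase _ (fun k => arctan (Λ k)) hjmem'
  have hsplitμ : μ j + ∑ k ∈ s, μ k = ∑ k, μ k := Finset.add_sum_erase _ μ hjmem'
  have hsplitS : Λ j * μ j ^ 2 + ∑ k ∈ s, Λ k * μ k ^ 2 = ∑ k, Λ k * μ k ^ 2 :=
    Finset.add_sum_erase _ (fun k => Λ k * μ k ^ 2) hjmem'
  have hm1 : 1 ≤ m := Nat.pos_of_ne_zero (by rintro rfl; exact j.elim0)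
  have hcards : (s.card : ℝ) = (m : ℝ) - 1 := by
    rw [hs_def, Finset.card_erase_of_mem hjmem', Finset.card_univ, Fintype.card_fin,
      Nat.cast_sub hm1]
    norm_num
  have hinv : ∑ i ∈ s, (Λ i)⁻¹ < b⁻¹ := by
    have h1 : arctan (∑ i ∈ s, (Λ i)⁻¹) ≤ ∑ i ∈ s, arctan (Λ i)⁻¹ :=
      arctan_sum_le s _ (fun i hi => (inv_pos.2 (hΛpos i hi)).le)
    have h2 : ∑ i ∈ s, arctan (Λ i)⁻¹ = ∑ i ∈ s, (π / 2 - arctan (Λ i)) :=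
      Finset.sum_congr rfl fun i hi => Real.arctan_inv_of_pos (hΛpos i hi)
    have h3 : ∑ i ∈ s, (π / 2 - arctan (Λ i)) = (s.card : ℝ) * (π / 2) - ∑ i ∈ s, arctan (Λ i) := by
      rw [Finset.sum_sub_distrib, Finset.sum_const, nsmul_eq_mul]
    have harctanj : arctan (Λ j) = -arctan b := by rw [hb_def]; simp [Real.arctan_neg]
    have h4 : arctan (∑ i ∈ s, (Λ i)⁻¹) < arctan b⁻¹ := by
      rw [Real.arctan_inv_of_pos hb]
      rw [h2, h3, hcards] at h1
      have : ((m : ℝ) - 2) * (π / 2) - arctan (Λ j) < ∑ i ∈ s, arctan (Λ i) := by linarith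
      rw [harctanj] at this
      calc arctan (∑ i ∈ s, (Λ i)⁻¹)
          ≤ ((m:ℝ) - 1) * (π / 2) - ∑ i ∈ s, arctan (Λ i) := h1
        _ < π / 2 - arctan b := by linarith [this]; 
    exact Real.arctan_strictMono.lt_iff_lt.1 h4
  -- Cauchy-Schwarz
  have hS : 0 ≤ ∑ i ∈ s, Λ i * μ i ^ 2 :=
    Finset.sum_nonneg fun i hi => mul_nonneg (hΛpos i hi).le (sq_nonneg _)
  have hCS : (∑ i ∈ s, μ i) ^ 2 ≤ (∑ i ∈ s, (Λ i)⁻¹) * ∑ i ∈ s, Λ i * μ i ^ 2 := by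
    have := Finset.sum_mul_sq_le_sq_mul_sq s (fun i => Real.sqrt (Λ i)⁻¹)
      (fun i => Real.sqrt (Λ i) * μ i)
    have e1 : ∑ i ∈ s, Real.sqrt (Λ i)⁻¹ * (Real.sqrt (Λ i) * μ i) = ∑ i ∈ s, μ i :=
      Finset.sum_congr rfl fun i hi => by
        rw [Real.sqrt_inv, ← mul_assoc,
          inv_mul_cancel₀ (Real.sqrt_ne_zero'.2 (hΛpos i hi)).symm.symm, one_mul]
    have e2 : ∑ i ∈ s, (Real.sqrt (Λ i)⁻¹) ^ 2 = ∑ i ∈ s, (Λ i)⁻¹ :=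
      Finset.sum_congr rfl fun i hi => Real.sq_sqrt (inv_pos.2 (hΛpos i hi)).le
    have e3 : ∑ i ∈ s, (Real.sqrt (Λ i) * μ i) ^ 2 = ∑ i ∈ s, Λ i * μ i ^ 2 :=
      Finset.sum_congr rfl fun i hi => by
        rw [mul_pow, Real.sq_sqrt (hΛpos i hi).le]
    rw [e1, e2, e3] at this
    exact this
  have hμj : μ j = -∑ i ∈ s, μ i := by rw [hμ] at hsplitμ; linarith
  have hμj2 : μ j ^ 2 = (∑ i ∈ s, μ i) ^ 2 := by rw [hμj]; ring
  have hΛj : Λ j = -b := by rw [hb_def]; ring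
  rw [← hsplitS, hΛj, hμj2]
  have h5 : (∑ i ∈ s, μ i) ^ 2 ≤ b⁻¹ * ∑ i ∈ s, Λ i * μ i ^ 2 := by
    calc (∑ i ∈ s, μ i) ^ 2 ≤ (∑ i ∈ s, (Λ i)⁻¹) * ∑ i ∈ s, Λ i * μ i ^ 2 := hCS
      _ ≤ b⁻¹ * ∑ i ∈ s, Λ i * μ i ^ 2 := mul_le_mul_of_nonneg_right hinv.le hS
  have := mul_le_mul_of_nonneg_left h5 hb.le
  rw [← mul_assoc, mul_inv_cancel₀ hb.ne', one_mul] at this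
  nlinarith

lemma convex_key (n : ℕ) (σ : ℝ) (hσ1 : ((n : ℝ) - 1) * (π / 2) < σ)
    (hD : Convex ℝ {y : Fin n → ℝ | σ - π / 2 < ∑ i, arctan (y i)})
    (x d : Fin n → ℝ) :
    ConvexOn ℝ {t : ℝ | σ - π / 2 < ∑ i, arctan (x i + t * d i)}
      (fun t => tan (σ - ∑ i, arctan (x i + t * d i))) := by
  set ψ : ℝ → ℝ := fun t => ∑ i, arctan (x i + t * d i) with hψ_def
  set T : Set ℝ := {t : ℝ | σ - π / 2 < ψ t} with hT_def
  have hline : ∀ (i : Fin n) (t : ℝ), HasDerivAt (fun t : ℝ => x i + t * d i) (d i) t :=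
    fun i t => by simpa using ((hasDerivAt_id t).mul_const (d i)).const_add (x i)
  set ψd : ℝ → ℝ := fun t => ∑ i, d i * (1 + (x i + t * d i) ^ 2)⁻¹ with hψd_def
  have hψ' : ∀ t : ℝ, HasDerivAt ψ (ψd t) t := by
    intro t
    have h := HasDerivAt.sum (u := Finset.univ)
      (A := fun i => fun t : ℝ => arctan (x i + t * d i))
      (A' := fun i => 1 / (1 + (x i + t * d i) ^ 2) * d i)
      (fun i _ => (hline i t).arctan)
    have he : ∑ i, 1 / (1 + (x i + t * d i) ^ 2) * d i = ψd t :=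
      Finset.sum_congr rfl fun i _ => by rw [one_div]; ring
    rw [he, Finset.sum_fn] at h
    exact h
  have hψcont : Continuous ψ := by
    have := fun t => (hψ' t).continuousAt
    exact continuous_iff_continuousAt.2 this
  have hTopen : IsOpen T := isOpen_lt continuous_const hψcont
  have hTconv : Convex ℝ T := by
    intro t1 ht1 t2 ht2 a b ha hb hab
    have hy1 : (fun i => x i + t1 * d i) ∈ {y : Fin n → ℝ | σ - π / 2 < ∑ i, arctan (y i)} := ht1
    have hy2 : (fun i => x i + t2 * d i) ∈ {y : Fin n → ℝ | σ - π / 2 < ∑ i, arctan (y i)} := ht2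
    have hmem := hD hy1 hy2 ha hb hab
    have heq : (a • (fun i => x i + t1 * d i) + b • (fun i => x i + t2 * d i) : Fin n → ℝ)
        = fun i => x i + (a • t1 + b • t2) * d i := by
      funext i
      simp only [Pi.add_apply, Pi.smul_apply, smul_eq_mul]
      calc a * (x i + t1 * d i) + b * (x i + t2 * d i)
          = (a + b) * x i + (a * t1 + b * t2) * d i := by ring
        _ = x i + (a * t1 + b * t2) * d i := by rw [hab, one_mul]
    rw [heq] at hmem
    exact hmem
  have hubd : ∀ t : ℝ, ψ t ≤ (n : ℝ) * (π / 2) := by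
    intro t
    have := Finset.sum_le_card_nsmul Finset.univ (fun i => arctan (x i + t * d i)) (π / 2)
      (fun i _ => (Real.arctan_lt_pi_div_two _).le)
    rwa [Finset.card_univ, Fintype.card_fin, nsmul_eq_mul] at this
  have hIoo : ∀ t ∈ T, σ - ψ t ∈ Set.Ioo (-(π / 2)) (π / 2) := by
    intro t ht
    constructor
    · have := hubd t; linarith
    · have : σ - π / 2 < ψ t := ht; linarith
  have hcos : ∀ t ∈ T, 0 < Real.cos (σ - ψ t) :=
    fun t ht => Real.cos_pos_of_mem_Ioo (hIoo t ht)
  -- first derivative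
  set F1 : ℝ → ℝ := fun t => -ψd t * (Real.cos (σ - ψ t) ^ 2)⁻¹ with hF1_def
  have hu : ∀ t : ℝ, HasDerivAt (fun t => σ - ψ t) (-ψd t) t :=
    fun t => (hψ' t).const_sub σ
  have hF1 : ∀ t ∈ T, HasDerivAt (fun t => tan (σ - ψ t)) (F1 t) t := by
    intro t ht
    have htan := Real.hasDerivAt_tan (x := σ - ψ t) (hcos t ht).ne'
    have h := htan.comp t (hu t)
    have : (1 / Real.cos (σ - ψ t) ^ 2) * (-ψd t) = F1 t := by
      rw [hF1_def]; ring
    rw [this] at h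
    exact h
  -- second derivative
  set P : ℝ → ℝ := fun t => ∑ i, (x i + t * d i) * (d i * (1 + (x i + t * d i) ^ 2)⁻¹) ^ 2
    with hP_def
  set F2 : ℝ → ℝ := fun t =>
    (Real.cos (σ - ψ t) ^ 2)⁻¹ * (2 * (P t + tan (σ - ψ t) * ψd t ^ 2)) with hF2_def
  have hA : ∀ t : ℝ, HasDerivAt ψd (-2 * P t) t := by
    intro t
    have hterm : ∀ i : Fin n, HasDerivAt (fun t => d i * (1 + (x i + t * d i) ^ 2)⁻¹)
        (-2 * ((x i + t * d i) * (d i * (1 + (x i + t * d i) ^ 2)⁻¹) ^ 2)) t := by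
      intro i
      have h1 : HasDerivAt (fun t : ℝ => 1 + (x i + t * d i) ^ 2)
          (2 * (x i + t * d i) * d i) t := by
        have h0 := ((hline i t).pow 2).const_add 1
        have he2 : ((2:ℕ):ℝ) * (x i + t * d i) ^ (2 - 1) * d i
            = 2 * (x i + t * d i) * d i := by norm_num
        rw [he2] at h0
        exact h0
      have hne : (1 : ℝ) + (x i + t * d i) ^ 2 ≠ 0 := by positivity
      have h2 := (h1.inv hne).const_mul (d i)
      refine h2.congr_deriv ?_
      field_simp
    have := HasDerivAt.sum (u := Finset.univ)
      (A := fun i => fun t : ℝ => d i * (1 + (x i + t * d i) ^ 2)⁻¹)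
      (A' := fun i => -2 * ((x i + t * d i) * (d i * (1 + (x i + t * d i) ^ 2)⁻¹) ^ 2))
      (fun i _ => hterm i)
    have he : ∑ i, -2 * ((x i + t * d i) * (d i * (1 + (x i + t * d i) ^ 2)⁻¹) ^ 2)
        = -2 * P t := by rw [hP_def]; rw [← Finset.mul_sum]
    rw [he, Finset.sum_fn] at this
    exact this
  have hF2 : ∀ t ∈ T, HasDerivAt F1 (F2 t) t := by
    intro t ht
    have hcost := hcos t ht
    have hcosne := hcost.ne'
    have hcossq : (Real.cos (σ - ψ t) ^ 2) ≠ 0 := pow_ne_zero 2 hcosne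
    have hcosder : HasDerivAt (fun t => Real.cos (σ - ψ t)) (-Real.sin (σ - ψ t) * -ψd t) t :=
      (hu t).cos
    have hpow := hcosder.pow 2
    have hinv := hpow.inv hcossq
    have hmul := (hA t).neg.mul hinv
    refine hmul.congr_deriv ?_
    symm
    show (Real.cos (σ - ψ t) ^ 2)⁻¹ * (2 * (P t + tan (σ - ψ t) * ψd t ^ 2)) = _
    rw [Real.tan_eq_sin_div_cos]
    norm_num
    field_simp
  -- nonnegativity of second derivative on T
  have hF2nonneg : ∀ t ∈ T, 0 ≤ F2 t := by
    intro t ht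
    have hcost := hcos t ht
    set Λ : Fin (n + 1) → ℝ := Fin.snoc (fun i : Fin n => x i + t * d i) (tan (σ - ψ t))
      with hΛ_def
    set μ : Fin (n + 1) → ℝ :=
      Fin.snoc (fun i : Fin n => d i * (1 + (x i + t * d i) ^ 2)⁻¹) (-ψd t) with hμ_def
    have hΛsum : ∑ i, arctan (Λ i) = σ := by
      rw [Fin.sum_univ_castSucc]
      simp only [hΛ_def, Fin.snoc_castSucc, Fin.snoc_last]
      rw [Real.arctan_tan (hIoo t ht).1 (hIoo t ht).2]
      have : ∑ i : Fin n, arctan (x i + t * d i) = ψ t := rfl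
      rw [this]; ring
    have hμsum : ∑ i, μ i = 0 := by
      rw [Fin.sum_univ_castSucc]
      simp only [hμ_def, Fin.snoc_castSucc, Fin.snoc_last]
      have : ∑ i : Fin n, d i * (1 + (x i + t * d i) ^ 2)⁻¹ = ψd t := rfl
      rw [this]; ring
    have hcore := sum_arctan_lt_core Λ μ (by rw [hΛsum]; push_cast; linarith) hμsum
    have hsplit : ∑ i, Λ i * μ i ^ 2 = P t + tan (σ - ψ t) * ψd t ^ 2 := by
      rw [Fin.sum_univ_castSucc]
      simp only [hΛ_def, hμ_def, Fin.snoc_castSucc, Fin.snoc_last]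
      rw [neg_sq]
    rw [hsplit] at hcore
    rw [hF2_def]
    have h1 : (0:ℝ) ≤ (Real.cos (σ - ψ t) ^ 2)⁻¹ := by positivity
    have h2 : (0:ℝ) ≤ 2 * (P t + tan (σ - ψ t) * ψd t ^ 2) := by linarith
    exact mul_nonneg h1 h2
  -- conclude
  have hint : interior T = T := hTopen.interior_eq
  refine convexOn_of_hasDerivWithinAt2_nonneg (f' := F1) (f'' := F2) hTconv ?_ ?_ ?_ ?_
  · exact fun t ht => ((hF1 t ht).continuousAt).continuousWithinAt
  · rw [hint]; exact fun t ht => (hF1 t ht).hasDerivWithinAt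
  · rw [hint]; exact fun t ht => (hF2 t ht).hasDerivWithinAt
  · rw [hint]; exact fun t ht => hF2nonneg t ht

lemma sum_arctan_le_bound {k : ℕ} (y : Fin k → ℝ) : ∑ i, arctan (y i) ≤ (k : ℝ) * (π / 2) := by
  have := Finset.sum_le_card_nsmul Finset.univ (fun i => arctan (y i)) (π / 2)
    (fun i _ => (Real.arctan_lt_pi_div_two _).le)
  rwa [Finset.card_univ, Fintype.card_fin, nsmul_eq_mul] at this

lemma gamma_convex : ∀ n : ℕ, ∀ σ : ℝ, ((n : ℝ) - 2) * (π / 2) < σ → σ < (n : ℝ) * (π / 2) →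
    Convex ℝ {lam : Fin n → ℝ | σ < ∑ i, arctan (lam i)} := by
  intro n
  induction n with
  | zero =>
    intro σ h1 h2
    have : {lam : Fin 0 → ℝ | σ < ∑ i, arctan (lam i)} = Set.univ := by
      ext lam
      simp only [Set.mem_setOf_eq, Set.mem_univ, iff_true]
      simpa using (by simpa using h2 : σ < 0)
    rw [this]; exact convex_univ
  | succ n ih =>
    intro σ h1 h2
    have hπ := Real.pi_pos
    have hσ1 : ((n : ℝ) - 1) * (π / 2) < σ := by push_cast at h1; linarith
    have hσ2 : σ < ((n : ℝ) + 1) * (π / 2) := by push_cast at h2; linarith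
    have hD : Convex ℝ {y : Fin n → ℝ | σ - π / 2 < ∑ i, arctan (y i)} := by
      apply ih (σ - π / 2) <;> [skip; skip] <;> push_cast <;> linarith
    intro p hp q hq a b ha hb hab
    simp only [Set.mem_setOf_eq] at hp hq ⊢
    set p' : Fin n → ℝ := fun i => p (Fin.castSucc i) with hp'_def
    set q' : Fin n → ℝ := fun i => q (Fin.castSucc i) with hq'_def
    have hsum_p : ∑ i, arctan (p i) = ∑ i, arctan (p' i) + arctan (p (Fin.last n)) :=
      Fin.sum_univ_castSucc (fun i => arctan (p i))
    have hsum_q : ∑ i, arctan (q i) = ∑ i, arctan (q' i) + arctan (q (Fin.last n)) :=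
      Fin.sum_univ_castSucc (fun i => arctan (q i))
    have hp' : σ - π / 2 < ∑ i, arctan (p' i) := by
      have := Real.arctan_lt_pi_div_two (p (Fin.last n)); rw [hsum_p] at hp; linarith
    have hq' : σ - π / 2 < ∑ i, arctan (q' i) := by
      have := Real.arctan_lt_pi_div_two (q (Fin.last n)); rw [hsum_q] at hq; linarith
    set d : Fin n → ℝ := fun i => q' i - p' i with hd_def
    set T : Set ℝ := {t : ℝ | σ - π / 2 < ∑ i, arctan (p' i + t * d i)} with hT_def
    set f : ℝ → ℝ := fun t => tan (σ - ∑ i, arctan (p' i + t * d i)) with hf_def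
    have hcf : ConvexOn ℝ T f := convex_key n σ hσ1 hD p' d
    have h0T : (0 : ℝ) ∈ T := by
      show σ - π / 2 < ∑ i, arctan (p' i + 0 * d i)
      simpa using hp'
    have h1T : (1 : ℝ) ∈ T := by
      show σ - π / 2 < ∑ i, arctan (p' i + 1 * d i)
      have he : ∀ i, p' i + 1 * d i = q' i := fun i => by rw [hd_def]; ring
      rw [Finset.sum_congr rfl fun i _ => by rw [he i]]
      exact hq'
    have hfb := hcf.2 h0T h1T ha hb hab
    simp only [smul_eq_mul, mul_zero, mul_one, zero_add] at hfb
    -- identify f values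
    have ha1 : a = 1 - b := by linarith
    have hr : ∀ i, p' i + b * d i = a * p' i + b * q' i := fun i => by
      rw [hd_def, ha1]; ring
    have hrsum : ∑ i, arctan (p' i + b * d i) = ∑ i, arctan (a * p' i + b * q' i) :=
      Finset.sum_congr rfl fun i _ => by rw [hr i]
    have hsum0 : ∑ i, arctan (p' i + 0 * d i) = ∑ i, arctan (p' i) :=
      Finset.sum_congr rfl fun i _ => by rw [zero_mul, add_zero]
    have hsum1 : ∑ i, arctan (p' i + 1 * d i) = ∑ i, arctan (q' i) :=
      Finset.sum_congr rfl fun i _ => by simp only [hd_def]; ring_nf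
    have hf0 : f 0 = tan (σ - ∑ i, arctan (p' i)) := by
      show tan (σ - ∑ i, arctan (p' i + 0 * d i)) = _
      rw [hsum0]
    have hf1 : f 1 = tan (σ - ∑ i, arctan (q' i)) := by
      show tan (σ - ∑ i, arctan (p' i + 1 * d i)) = _
      rw [hsum1]
    have hfbval : f b = tan (σ - ∑ i, arctan (a * p' i + b * q' i)) := by
      show tan (σ - ∑ i, arctan (p' i + b * d i)) = _
      rw [hrsum]
    -- membership of combination in D
    have hrD : σ - π / 2 < ∑ i, arctan (a * p' i + b * q' i) := by
      have := hD hp' hq' ha hb hab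
      simpa [Pi.add_apply, Pi.smul_apply, smul_eq_mul] using this
    -- bounds for the angles
    have hup_lb : -(π / 2) < σ - ∑ i, arctan (p' i) := by
      have := sum_arctan_le_bound p'; linarith
    have huq_lb : -(π / 2) < σ - ∑ i, arctan (q' i) := by
      have := sum_arctan_le_bound q'; linarith
    have hur_lb : -(π / 2) < σ - ∑ i, arctan (a * p' i + b * q' i) := by
      have := sum_arctan_le_bound (fun i => a * p' i + b * q' i); linarith
    -- endpoint comparisons
    have hplast : tan (σ - ∑ i, arctan (p' i)) < p (Fin.last n) := by
      have hlt : σ - ∑ i, arctan (p' i) < arctan (p (Fin.last n)) := by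
        rw [hsum_p] at hp; linarith
      have := Real.tan_lt_tan_of_lt_of_lt_pi_div_two hup_lb
        (Real.arctan_lt_pi_div_two (p (Fin.last n))) hlt
      rwa [Real.tan_arctan] at this
    have hqlast : tan (σ - ∑ i, arctan (q' i)) < q (Fin.last n) := by
      have hlt : σ - ∑ i, arctan (q' i) < arctan (q (Fin.last n)) := by
        rw [hsum_q] at hq; linarith
      have := Real.tan_lt_tan_of_lt_of_lt_pi_div_two huq_lb
        (Real.arctan_lt_pi_div_two (q (Fin.last n))) hlt
      rwa [Real.tan_arctan] at this
    -- strict combination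
    have hcomb : a * f 0 + b * f 1 < a * p (Fin.last n) + b * q (Fin.last n) := by
      rw [hf0, hf1]
      rcases ha.lt_or_eq with ha' | ha'
      · have h1' : a * tan (σ - ∑ i, arctan (p' i)) < a * p (Fin.last n) :=
          (mul_lt_mul_iff_right₀ ha').2 hplast
        have h2' : b * tan (σ - ∑ i, arctan (q' i)) ≤ b * q (Fin.last n) :=
          mul_le_mul_of_nonneg_left hqlast.le hb
        linarith
      · have hb1 : b = 1 := by linarith
        rw [← ha', hb1]; simpa using hqlast
    have hblt : tan (σ - ∑ i, arctan (a * p' i + b * q' i))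
        < a * p (Fin.last n) + b * q (Fin.last n) := by
      rw [← hfbval]; linarith
    -- conclude
    have harc : σ - ∑ i, arctan (a * p' i + b * q' i)
        < arctan (a * p (Fin.last n) + b * q (Fin.last n)) := by
      have := Real.arctan_strictMono hblt
      rwa [Real.arctan_tan hur_lb (by linarith : σ - ∑ i, arctan (a * p' i + b * q' i) < π / 2)]
        at this
    have hfinal : ∑ i, arctan ((a • p + b • q) i)
        = ∑ i, arctan (a * p' i + b * q' i) + arctan (a * p (Fin.last n) + b * q (Fin.last n)) := by
      rw [Fin.sum_univ_castSucc (fun i => arctan ((a • p + b • q) i))]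
      simp only [Pi.add_apply, Pi.smul_apply, smul_eq_mul, hp'_def, hq'_def]
    rw [hfinal]
    linarith

theorem stmt5 (n : ℕ) (hn : 1 ≤ n) (σ : ℝ)
    (h1 : ((n : ℝ) - 2) * (π / 2) < σ) (h2 : σ < (n : ℝ) * (π / 2)) :
    Convex ℝ {lam : Fin n → ℝ | σ < ∑ i, Real.arctan (lam i)} := by
  exact gamma_convex n σ h1 h2
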